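/- The function F(y) = y - log(1+y) is a strictly increasing continuous bijection from (0,infinity) onto (0,infinity), and for every C > 0 the unique y > 0 solving y - log(1+y) = C satisfies 1 < y/C <= e/(e-1) + 1/((e-1)*C), where e = exp(1). -/

import Mathlib

open Real

lemma log_le_div_e {x : ℝ} (hx : 0 < x) : Real.log x ≤ x / Real.exp 1 := by
  have h := Real.log_le_sub_one_of_pos (show (0:ℝ) < x / Real.exp 1 by positivity)
  rw [Real.log_div (ne_of_gt hx) (ne_of_gt (Real.exp_pos 1)), Real.log_exp] at h
  linarith

lemma F_strictMono : StrictMonoOn (fun y : ℝ => y - Real.log (1 + y)) (Set.Ioi 0) := by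
  intro a ha b hb hab
  simp only [Set.mem_Ioi] at ha hb
  have h1a : (0:ℝ) < 1 + a := by linarith
  have h1b : (0:ℝ) < 1 + b := by linarith
  have key : Real.log (1 + b) - Real.log (1 + a) < b - a := by
    rw [← Real.log_div (ne_of_gt h1b) (ne_of_gt h1a)]
    have h := Real.log_le_sub_one_of_pos (show (0:ℝ) < (1+b)/(1+a) by positivity)
    have : (1+b)/(1+a) - 1 = (b-a)/(1+a) := by field_simp; ring
    rw [this] at h
    have : (b-a)/(1+a) < b - a := by
      rw [div_lt_iff₀ h1a]
      nlinarith
    linarith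
  simp only
  linarith

lemma F_cont : ContinuousOn (fun y : ℝ => y - Real.log (1 + y)) (Set.Ioi 0) := by
  apply ContinuousOn.sub continuousOn_id
  apply ContinuousOn.log (by fun_prop)
  intro x hx
  simp only [Set.mem_Ioi] at hx
  linarith

lemma F_cont' (s : Set ℝ) (hs : ∀ x ∈ s, 0 < x) :
    ContinuousOn (fun y : ℝ => y - Real.log (1 + y)) s := by
  apply ContinuousOn.sub continuousOn_id
  apply ContinuousOn.log (by fun_prop)
  intro x hx
  have := hs x hx
  linarith

theorem y_minus_log_bijection_and_bounds :
    StrictMonoOn (fun y : ℝ => y - Real.log (1 + y)) (Set.Ioi 0) ∧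
    ContinuousOn (fun y : ℝ => y - Real.log (1 + y)) (Set.Ioi 0) ∧
    Set.BijOn (fun y : ℝ => y - Real.log (1 + y)) (Set.Ioi 0) (Set.Ioi 0) ∧
    (∀ C > (0 : ℝ), ∀ y > (0 : ℝ), y - Real.log (1 + y) = C →
      1 < y / C ∧
      y / C ≤ Real.exp 1 / (Real.exp 1 - 1) + 1 / ((Real.exp 1 - 1) * C)) := by
  have he2 : (2:ℝ) < Real.exp 1 := by
    have := Real.exp_one_gt_d9; linarith
  refine ⟨F_strictMono, F_cont, ⟨?_, F_strictMono.injOn, ?_⟩, ?_⟩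
  · -- MapsTo
    intro y hy
    simp only [Set.mem_Ioi] at hy ⊢
    have := Real.log_lt_sub_one_of_pos (show (0:ℝ) < 1 + y by linarith)
      (ne_of_gt (by linarith : (1:ℝ) < 1 + y))
    linarith
  · -- SurjOn
    intro C hC
    simp only [Set.mem_Ioi] at hC
    set E := Real.exp 1 with hE
    set a : ℝ := C / 2 with ha
    set b : ℝ := E * (C + 1) with hb
    have ha0 : 0 < a := by positivity
    have hab : a ≤ b := by
      have : C / 2 ≤ C + 1 := by linarith
      nlinarith
    have hcont := F_cont' (Set.Icc a b) (fun x hx => lt_of_lt_of_le ha0 hx.1)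
    have hFa : a - Real.log (1 + a) ≤ C := by
      have := Real.log_nonneg (show (1:ℝ) ≤ 1 + a by linarith)
      linarith
    have hFb : C ≤ b - Real.log (1 + b) := by
      have hb0 : 0 < b := lt_of_lt_of_le ha0 hab
      have h := log_le_div_e (show (0:ℝ) < 1 + b by linarith)
      rw [← hE] at h
      have hE0 : (0:ℝ) < E := by linarith
      have : (1 + b) / E = 1/E + (C+1) := by
        rw [hb]; field_simp
      rw [this] at h
      have h1e : 1/E < 1 := by
        rw [div_lt_one hE0]; linarith
      -- b - log(1+b) ≥ b - (1/E + C + 1) = E*(C+1) - 1/E - C - 1 ≥ C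
      have : b - (1/E + (C+1)) ≥ C := by
        rw [hb]; nlinarith
      linarith
    have := intermediate_value_Icc hab hcont
    have hmem : C ∈ Set.Icc ((fun y : ℝ => y - Real.log (1 + y)) a)
        ((fun y : ℝ => y - Real.log (1 + y)) b) := ⟨hFa, hFb⟩
    obtain ⟨y, hy, hyC⟩ := this hmem
    exact ⟨y, lt_of_lt_of_le ha0 hy.1, hyC⟩
  · -- bounds
    intro C hC y hy hyC
    have h1y : (0:ℝ) < 1 + y := by linarith
    have hlogpos : 0 < Real.log (1 + y) := Real.log_pos (by linarith)
    have hCy : C < y := by linarith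
    constructor
    · rw [lt_div_iff₀ hC]; linarith
    · set E := Real.exp 1 with hE
      have hE1 : (1:ℝ) < E := by linarith
      have h := log_le_div_e h1y
      rw [← hE] at h
      -- E*C = E*y - E*log(1+y) ≥ E*y - (1+y), so (E-1)*y ≤ E*C + 1
      have hkey : (E - 1) * y ≤ E * C + 1 := by
        have h' := (le_div_iff₀ (show (0:ℝ) < E by linarith)).mp h
        nlinarith [hyC, h']
      have step : y / C ≤ (E * C + 1) / ((E - 1) * C) := by
        rw [div_le_div_iff₀ hC (mul_pos (by linarith : (0:ℝ) < E - 1) hC)]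
        nlinarith
      have hne1 : E - 1 ≠ 0 := by linarith
      have hCne : C ≠ 0 := ne_of_gt hC
      have : (E * C + 1) / ((E - 1) * C) = E / (E - 1) + 1 / ((E - 1) * C) := by
        field_simp
      linarith [this ▸ step]
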